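/- arXiv:2306.17144 — 5 statements merged into one kernel-verified Lean document; each statement's English description precedes it below -/
import Mathlib

section
/- Let f : ℝⁿ → ℝ and g : ℝⁿ → ℝ ∪ {+∞} be arbitrary functions, and for i = 1,…,p let h_i : ℝ^{m_i} → ℝ be convex and Ψ_i : ℝⁿ → ℝ^{m_i} be arbitrary maps. If x̄ ∈ ℝⁿ is a global minimizer of φ with φ(x̄) < +∞ (equivalently, g(x̄) < +∞), then there exists ȳ = (ȳ_1,…,ȳ_p) ∈ ℝ^{m_1} × ⋯ × ℝ^{m_p} such that (x̄,ȳ) is a global minimizer of Φ, i.e., Φ(x̄,ȳ) ≤ Φ(x,y) for all (x,y). -/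
open scoped BigOperators RealInnerProductSpace

lemma exists_subgradient' {m : ℕ} (h : EuclideanSpace ℝ (Fin m) → ℝ)
    (hconv : ConvexOn ℝ Set.univ h) (v : EuclideanSpace ℝ (Fin m)) :
    ∃ y : EuclideanSpace ℝ (Fin m), ∀ u, h v + ⟪u - v, y⟫ ≤ h u := by
  have hcont : Continuous h := hconv.locallyLipschitz.continuous
  set S : Set (EuclideanSpace ℝ (Fin m) × ℝ) := {q | h q.1 < q.2} with hS
  have hSopen : IsOpen S := isOpen_lt (hcont.comp continuous_fst) continuous_snd
  have hSconv : Convex ℝ S := by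
    rintro ⟨p1, p2⟩ hp ⟨q1, q2⟩ hq a b ha hb hab
    simp only [hS, Set.mem_setOf_eq] at hp hq ⊢
    have hcv := hconv.2 (Set.mem_univ p1) (Set.mem_univ q1) ha hb hab
    simp only [smul_eq_mul] at hcv
    calc h (a • p1 + b • q1) ≤ a * h p1 + b * h q1 := hcv
      _ < a * p2 + b * q2 := by
          rcases ha.lt_or_eq with ha' | ha'
          · rcases hb.lt_or_eq with hb' | hb'
            · exact add_lt_add (by nlinarith) (by nlinarith)
            · rw [← hb'] at hab ⊢; simp only [add_zero] at hab; subst hab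
              simpa using hp
          · rw [← ha'] at hab ⊢; simp only [zero_add] at hab; subst hab
            simpa using hq
      _ = (a • (p1, p2) + b • (q1, q2)).2 := by simp
  have hdisj : (v, h v) ∉ S := by simp [hS]
  obtain ⟨L, hL⟩ := geometric_hahn_banach_open_point hSconv hSopen hdisj
  set c : ℝ := L (0, 1) with hc
  have hdecomp : ∀ (u : EuclideanSpace ℝ (Fin m)) (t : ℝ),
      L (u, t) = L (u, 0) + t * c := by
    intro u t
    have : (u, t) = (u, (0:ℝ)) + t • ((0 : EuclideanSpace ℝ (Fin m)), (1:ℝ)) := by simp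
    rw [this, map_add, map_smul]; simp [hc, mul_comm]
  have hcneg : c < 0 := by
    have h1 := hL (v, h v + 1) (by simp [hS])
    have e1 := hdecomp v (h v + 1)
    have e2 := hdecomp v (h v)
    rw [e1, e2] at h1; linarith
  have key : ∀ u, L (u, 0) + h u * c ≤ L (v, 0) + h v * c := by
    intro u
    refine le_of_forall_pos_le_add fun ε hε => ?_
    have hd : (0:ℝ) < ε / (-c) := div_pos hε (by linarith)
    have h1 := hL (u, h u + ε / (-c)) (by simp [hS]; linarith)
    have e1 := hdecomp u (h u + ε / (-c))
    have e2 := hdecomp v (h v)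
    rw [e1, e2] at h1
    have h3 : ε / -c * -c = ε := div_mul_cancel₀ _ (by linarith)
    nlinarith
  set ℓ : EuclideanSpace ℝ (Fin m) →L[ℝ] ℝ :=
    (-c)⁻¹ • (L.comp (ContinuousLinearMap.inl ℝ (EuclideanSpace ℝ (Fin m)) ℝ)) with hℓ
  refine ⟨(InnerProductSpace.toDual ℝ _).symm ℓ, fun u => ?_⟩
  have hinner : ⟪u - v, (InnerProductSpace.toDual ℝ (EuclideanSpace ℝ (Fin m))).symm ℓ⟫
      = ℓ (u - v) := by
    rw [real_inner_comm]; exact InnerProductSpace.toDual_symm_apply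
  rw [hinner]
  have h2 := key u
  have hℓu : ℓ (u - v) = (-c)⁻¹ * (L ((u - v), 0)) := by simp [hℓ]
  have hsplit : L ((u - v), 0) = L (u, 0) - L (v, 0) := by
    have : ((u - v), (0:ℝ)) = (u, (0:ℝ)) - (v, (0:ℝ)) := by simp
    rw [this, map_sub]
  rw [hℓu, hsplit]
  have hcpos : (0:ℝ) < -c := by linarith
  rw [inv_mul_eq_div, add_comm, ← le_sub_iff_add_le, div_le_iff₀ hcpos]
  nlinarith

lemma ereal_coe_sum {ι : Type*} (s : Finset ι) (f : ι → ℝ) :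
    ((∑ i ∈ s, f i : ℝ) : EReal) = ∑ i ∈ s, ((f i : ℝ) : EReal) := by
  induction s using Finset.cons_induction with
  | empty => simp
  | cons a s ha ih => rw [Finset.sum_cons, Finset.sum_cons, EReal.coe_add, ih]

/-- Fenchel conjugate of a real-valued function, valued in `ℝ ∪ {+∞}` (encoded in `EReal`). -/
noncomputable def fenchelConj {m : ℕ} (h : EuclideanSpace ℝ (Fin m) → ℝ)
    (y : EuclideanSpace ℝ (Fin m)) : EReal :=
  ⨆ u : EuclideanSpace ℝ (Fin m), ((⟪u, y⟫ - h u : ℝ) : EReal)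

lemma fenchelConj_of_subgradient {m : ℕ} (h : EuclideanSpace ℝ (Fin m) → ℝ)
    {v y : EuclideanSpace ℝ (Fin m)} (hy : ∀ u, h v + ⟪u - v, y⟫ ≤ h u) :
    fenchelConj h y = ((⟪v, y⟫ - h v : ℝ) : EReal) := by
  apply le_antisymm
  · apply iSup_le
    intro u
    apply EReal.coe_le_coe_iff.mpr
    have h1 := hy u
    rw [inner_sub_left] at h1
    linarith
  · exact le_iSup (fun u => ((⟪u, y⟫ - h u : ℝ) : EReal)) v

lemma fenchelYoung {m : ℕ} (h : EuclideanSpace ℝ (Fin m) → ℝ)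
    (y u : EuclideanSpace ℝ (Fin m)) :
    ((⟪u, y⟫ - h u : ℝ) : EReal) ≤ fenchelConj h y :=
  le_iSup (fun u => ((⟪u, y⟫ - h u : ℝ) : EReal)) u

/-- If `xbar` is a global minimizer of the primal objective `φ` with `φ(xbar) < +∞`,
then there exists `ybar` such that `(xbar, ybar)` is a global minimizer of the
primal-dual objective `Φ`. -/
theorem min_phi_implies_min_Phi {n p : ℕ} {m : Fin p → ℕ}
    (f : EuclideanSpace ℝ (Fin n) → ℝ)
    (g : EuclideanSpace ℝ (Fin n) → EReal) (hg : ∀ x, g x ≠ ⊥)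
    (h : ∀ i, EuclideanSpace ℝ (Fin (m i)) → ℝ)
    (hconv : ∀ i, ConvexOn ℝ Set.univ (h i))
    (Ψ : ∀ i, EuclideanSpace ℝ (Fin n) → EuclideanSpace ℝ (Fin (m i)))
    (xbar : EuclideanSpace ℝ (Fin n))
    (hmin : ∀ x : EuclideanSpace ℝ (Fin n),
      g xbar + ((f xbar - ∑ i, h i (Ψ i xbar) : ℝ) : EReal)
        ≤ g x + ((f x - ∑ i, h i (Ψ i x) : ℝ) : EReal))
    (hfin : g xbar + ((f xbar - ∑ i, h i (Ψ i xbar) : ℝ) : EReal) < ⊤) :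
    ∃ ybar : ∀ i, EuclideanSpace ℝ (Fin (m i)),
      ∀ (x : EuclideanSpace ℝ (Fin n)) (y : ∀ i, EuclideanSpace ℝ (Fin (m i))),
        g xbar + ((f xbar : ℝ) : EReal)
            + ∑ i, (fenchelConj (h i) (ybar i) - ((⟪Ψ i xbar, ybar i⟫ : ℝ) : EReal))
          ≤ g x + ((f x : ℝ) : EReal)
            + ∑ i, (fenchelConj (h i) (y i) - ((⟪Ψ i x, y i⟫ : ℝ) : EReal)) := by
  choose ybar hybar using fun i => exists_subgradient' (h i) (hconv i) (Ψ i xbar)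
  refine ⟨ybar, fun x y => ?_⟩
  -- LHS evaluates to the primal objective at xbar
  have hterm : ∀ i, fenchelConj (h i) (ybar i) - ((⟪Ψ i xbar, ybar i⟫ : ℝ) : EReal)
      = ((-(h i (Ψ i xbar)) : ℝ) : EReal) := by
    intro i
    rw [fenchelConj_of_subgradient (h i) (hybar i), ← EReal.coe_sub]
    congr 1
    ring
  have hLHS : g xbar + ((f xbar : ℝ) : EReal)
      + ∑ i, (fenchelConj (h i) (ybar i) - ((⟪Ψ i xbar, ybar i⟫ : ℝ) : EReal))
      = g xbar + ((f xbar - ∑ i, h i (Ψ i xbar) : ℝ) : EReal) := by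
    simp only [hterm]
    rw [← ereal_coe_sum, add_assoc, ← EReal.coe_add]
    congr 2
    rw [Finset.sum_neg_distrib]
    ring
  -- RHS is bounded below by primal objective at x
  have hRHS : g x + ((f x - ∑ i, h i (Ψ i x) : ℝ) : EReal)
      ≤ g x + ((f x : ℝ) : EReal)
        + ∑ i, (fenchelConj (h i) (y i) - ((⟪Ψ i x, y i⟫ : ℝ) : EReal)) := by
    have hterm2 : ∀ i, ((-(h i (Ψ i x)) : ℝ) : EReal)
        ≤ fenchelConj (h i) (y i) - ((⟪Ψ i x, y i⟫ : ℝ) : EReal) := by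
      intro i
      rw [EReal.le_sub_iff_add_le (Or.inl (EReal.coe_ne_bot _)) (Or.inl (EReal.coe_ne_top _)),
        ← EReal.coe_add]
      have : (-(h i (Ψ i x)) + ⟪Ψ i x, y i⟫ : ℝ) = (⟪Ψ i x, y i⟫ - h i (Ψ i x) : ℝ) := by ring
      rw [this]
      exact fenchelYoung (h i) (y i) (Ψ i x)
    calc g x + ((f x - ∑ i, h i (Ψ i x) : ℝ) : EReal)
        = g x + ((f x : ℝ) : EReal) + ∑ i, ((-(h i (Ψ i x)) : ℝ) : EReal) := by
          rw [← ereal_coe_sum, add_assoc, ← EReal.coe_add]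
          congr 2
          rw [Finset.sum_neg_distrib]
          ring
      _ ≤ g x + ((f x : ℝ) : EReal)
            + ∑ i, (fenchelConj (h i) (y i) - ((⟪Ψ i x, y i⟫ : ℝ) : EReal)) :=
          add_le_add le_rfl (Finset.sum_le_sum fun i _ => hterm2 i)
  rw [hLHS]
  exact (hmin x).trans hRHS
end

section
/- Let f : ℝⁿ → ℝ, g : ℝⁿ → ℝ, κ ≥ 0, and for i = 1,…,p let Ψ_i : ℝⁿ → ℝ^{m_i} be differentiable with derivative x ↦ DΨ_i(x) that is L_i-Lipschitz continuous (in operator norm), and let c_i : ℝ^{m_i} → ℝ be convex. Fix x ∈ ℝⁿ, y_i ∈ ℝ^{m_i}, γ > 0 and μ_i > 0, and let v ∈ ℝⁿ satisfy the κ-descent inequality for f at x. Suppose: (a) x̂ ∈ ℝⁿ minimizes u ↦ g(u) + (1/(2γ))‖u − (x + γ Σ_{i=1}^p DΨ_i(x)* y_i − γ v)‖² over ℝⁿ and g is differentiable at x̂; (b) for each i, ŷ_i minimizes u ↦ c_i(u) + (1/(2μ_i))‖u − (y_i + μ_i Ψ_i(x̂))‖² over ℝ^{m_i} and c_i is differentiable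 at ŷ_i; (c) there exists v̂ ∈ ℝⁿ satisfying the κ-descent inequality for f at x̂. Define Φ(x,y) := f(x) + g(x) + Σ_{i=1}^p (c_i(y_i) − ⟨Ψ_i(x), y_i⟩), d := x̂ − x and e_i := ŷ_i − y_i. Then the Dini upper directional derivative of Φ at (x̂, ŷ) in the direction (d, e) satisfies d⁺Φ((x̂,ŷ); (d,e)) ≤ (2κ + p/2 + Σ_{i=1}^p L_i‖y_i‖ − 1/γ)‖d‖² + Σ_{i=1}^p ( (1/2)‖DΨ_i(x̂)‖² − 1/μ_i )‖e_i‖², where ‖DΨ_i(x̂)‖ is the operator norm. -/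
set_option maxHeartbeats 1000000


open scoped BigOperators RealInnerProductSpace Topology

section aux
variable {E : Type*} [NormedAddCommGroup E] [InnerProductSpace ℝ E]

lemma line_hasDerivAt (z w : E) : HasDerivAt (fun t : ℝ => z + t • w) w 0 := by
  simpa using ((hasDerivAt_id (0:ℝ)).smul_const w).const_add z

lemma prox_dirDeriv (g : E → ℝ) (ρ : ℝ) (hρ : 0 < ρ) (b z : E)
    (hmin : ∀ u, g z + (1/(2*ρ)) * ‖z - b‖^2 ≤ g u + (1/(2*ρ)) * ‖u - b‖^2)
    (hg : DifferentiableAt ℝ g z) (w : E) :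
    fderiv ℝ g z w = -(1/ρ) * ⟪z - b, w⟫ := by
  have hline := line_hasDerivAt z w
  have hz0 : z + (0:ℝ) • w = z := by simp
  have hg1 : HasDerivAt (fun t : ℝ => g (z + t • w)) (fderiv ℝ g z w) 0 := by
    have := (hz0 ▸ hg.hasFDerivAt).comp_hasDerivAt 0 hline
    simp at this; exact this
  have hA : HasDerivAt (fun t : ℝ => (z + t • w) - b) w 0 := hline.sub_const b
  have hq0 : HasDerivAt (fun t : ℝ => ⟪(z + t • w) - b, (z + t • w) - b⟫)
      (⟪z - b, w⟫ + ⟪w, z - b⟫) 0 := by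
    have := HasDerivAt.inner ℝ hA hA
    simpa [hz0] using this
  have hq : HasDerivAt (fun t : ℝ => (1/(2*ρ)) * ‖(z + t • w) - b‖^2)
      ((1/ρ) * ⟪z - b, w⟫) 0 := by
    have h := hq0.const_mul (1/(2*ρ))
    rw [show (1/(2*ρ)) * (⟪z - b, w⟫ + ⟪w, z - b⟫) = (1/ρ) * ⟪z - b, w⟫ from by
      rw [real_inner_comm w (z - b)]; field_simp; ring] at h
    simp_rw [real_inner_self_eq_norm_sq] at h
    exact h
  have hmin' : IsLocalMin (fun t : ℝ => g (z + t • w) + (1/(2*ρ)) * ‖(z + t • w) - b‖^2) 0 := by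
    apply Filter.Eventually.of_forall
    intro t
    simpa [hz0] using hmin (z + t • w)
  have := hmin'.hasDerivAt_eq_zero (hg1.add hq)
  field_simp at this ⊢
  linarith [this]

end aux

/-- The Dini upper directional derivative (valued in `EReal`) of a real-valued function `F`
of two (blocks of) variables at `(z, w)` in the direction `(d, e)`:
`limsup_{t ↓ 0} (F(z + t d, w + t e) − F(z, w))/t`. -/
noncomputable def diniUpper2 {n p : ℕ} {m : Fin p → ℕ}
    (F : EuclideanSpace ℝ (Fin n) → (∀ i, EuclideanSpace ℝ (Fin (m i))) → ℝ)
    (z : EuclideanSpace ℝ (Fin n)) (w : ∀ i, EuclideanSpace ℝ (Fin (m i)))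
    (d : EuclideanSpace ℝ (Fin n)) (e : ∀ i, EuclideanSpace ℝ (Fin (m i))) : EReal :=
  Filter.limsup
    (fun t : ℝ => (((F (z + t • d) (fun i => w i + t • e i) - F z w) / t : ℝ) : EReal))
    (𝓝[>] (0 : ℝ))

/-- Proposition 3.5: the direction `(d, e)` produced by the double-proximal subgradient
step is a descent direction for the primal-dual objective `Φ` at `(x̂, ŷ)` whenever `g`
and the `cᵢ` are differentiable there. -/
theorem dini_descent_direction {n p : ℕ} {m : Fin p → ℕ}
    (f g : EuclideanSpace ℝ (Fin n) → ℝ) (κ : ℝ) (hκ : 0 ≤ κ)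
    (Ψ : ∀ i, EuclideanSpace ℝ (Fin n) → EuclideanSpace ℝ (Fin (m i)))
    (L : Fin p → ℝ)
    (hΨdiff : ∀ i, Differentiable ℝ (Ψ i))
    (hΨlip : ∀ i, ∀ a b : EuclideanSpace ℝ (Fin n),
      ‖fderiv ℝ (Ψ i) a - fderiv ℝ (Ψ i) b‖ ≤ L i * ‖a - b‖)
    (c : ∀ i, EuclideanSpace ℝ (Fin (m i)) → ℝ)
    (hc : ∀ i, ConvexOn ℝ Set.univ (c i))
    (x : EuclideanSpace ℝ (Fin n)) (y : ∀ i, EuclideanSpace ℝ (Fin (m i)))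
    (γ : ℝ) (hγ0 : 0 < γ) (μ : Fin p → ℝ) (hμ0 : ∀ i, 0 < μ i)
    (v : EuclideanSpace ℝ (Fin n))
    (hv : ∀ z, f z ≤ f x + ⟪v, z - x⟫ + κ * ‖z - x‖ ^ 2)
    (xh : EuclideanSpace ℝ (Fin n))
    (hxh : ∀ u : EuclideanSpace ℝ (Fin n),
      g xh + (1 / (2 * γ)) *
          ‖xh - (x + γ • ∑ i, (ContinuousLinearMap.adjoint (fderiv ℝ (Ψ i) x)) (y i) - γ • v)‖ ^ 2
        ≤ g u + (1 / (2 * γ)) *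
          ‖u - (x + γ • ∑ i, (ContinuousLinearMap.adjoint (fderiv ℝ (Ψ i) x)) (y i) - γ • v)‖ ^ 2)
    (hgdiff : DifferentiableAt ℝ g xh)
    (yh : ∀ i, EuclideanSpace ℝ (Fin (m i)))
    (hyh : ∀ i, ∀ u : EuclideanSpace ℝ (Fin (m i)),
      c i (yh i) + (1 / (2 * μ i)) * ‖yh i - (y i + (μ i) • Ψ i xh)‖ ^ 2
        ≤ c i u + (1 / (2 * μ i)) * ‖u - (y i + (μ i) • Ψ i xh)‖ ^ 2)
    (hcdiff : ∀ i, DifferentiableAt ℝ (c i) (yh i))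
    (hvh : ∃ vh : EuclideanSpace ℝ (Fin n),
      ∀ z, f z ≤ f xh + ⟪vh, z - xh⟫ + κ * ‖z - xh‖ ^ 2)
    :
    diniUpper2
        (fun x' y' => f x' + g x' + ∑ i, (c i (y' i) - ⟪Ψ i x', y' i⟫))
        xh yh (xh - x) (fun i => yh i - y i)
      ≤ (((2 * κ + (p : ℝ) / 2 + ∑ i, L i * ‖y i‖ - 1 / γ) * ‖xh - x‖ ^ 2
          + ∑ i, ((1 / 2) * ‖fderiv ℝ (Ψ i) xh‖ ^ 2 - 1 / μ i) * ‖yh i - y i‖ ^ 2 : ℝ)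
        : EReal) := by
  obtain ⟨vh, hvh⟩ := hvh
  set d : EuclideanSpace ℝ (Fin n) := xh - x with hd
  set e : ∀ i, EuclideanSpace ℝ (Fin (m i)) := fun i => yh i - y i with he
  set b : EuclideanSpace ℝ (Fin n) :=
    x + γ • ∑ i, (ContinuousLinearMap.adjoint (fderiv ℝ (Ψ i) x)) (y i) - γ • v with hb
  -- the smooth part of the difference quotient
  set G : ℝ → ℝ := fun t =>
    g (xh + t • d) + ∑ i, (c i (yh i + t • e i) - ⟪Ψ i (xh + t • d), yh i + t • e i⟫) with hG
  have hz0 : xh + (0:ℝ) • d = xh := by simp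
  have hG0 : G 0 = g xh + ∑ i, (c i (yh i) - ⟪Ψ i xh, yh i⟫) := by
    simp [hG]
  -- derivative of G at 0
  set ℓ : ℝ := fderiv ℝ g xh d + ∑ i, (fderiv ℝ (c i) (yh i) (e i)
      - (⟪Ψ i xh, e i⟫ + ⟪(fderiv ℝ (Ψ i) xh) d, yh i⟫)) with hℓ
  have hgl : HasDerivAt (fun t : ℝ => g (xh + t • d)) (fderiv ℝ g xh d) 0 := by
    have := (hz0 ▸ hgdiff.hasFDerivAt).comp_hasDerivAt 0 (line_hasDerivAt xh d)
    simp at this; exact this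
  have hGl : HasDerivAt G ℓ 0 := by
    apply hgl.add
    apply HasDerivAt.fun_sum
    intro i _
    have hy0 : yh i + (0:ℝ) • e i = yh i := by simp
    have hcl : HasDerivAt (fun t : ℝ => c i (yh i + t • e i)) (fderiv ℝ (c i) (yh i) (e i)) 0 := by
      have := (hy0 ▸ (hcdiff i).hasFDerivAt).comp_hasDerivAt 0 (line_hasDerivAt (yh i) (e i))
      simp at this; exact this
    have hΨl : HasDerivAt (fun t : ℝ => Ψ i (xh + t • d)) ((fderiv ℝ (Ψ i) xh) d) 0 := by
      have := (hz0 ▸ (hΨdiff i xh).hasFDerivAt).comp_hasDerivAt 0 (line_hasDerivAt xh d)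
      simp at this; exact this
    have hin : HasDerivAt (fun t : ℝ => ⟪Ψ i (xh + t • d), yh i + t • e i⟫)
        (⟪Ψ i xh, e i⟫ + ⟪(fderiv ℝ (Ψ i) xh) d, yh i⟫) 0 := by
      have := HasDerivAt.inner ℝ hΨl (line_hasDerivAt (yh i) (e i))
      simpa [hz0] using this
    exact hcl.sub hin
  -- pointwise bound on the difference quotient, for t > 0
  have hTR : ∀ t ∈ Set.Ioi (0:ℝ),
      ((f (xh + t • d) + g (xh + t • d) + ∑ i, (c i (yh i + t • e i)
          - ⟪Ψ i (xh + t • d), yh i + t • e i⟫))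
        - (f xh + g xh + ∑ i, (c i (yh i) - ⟪Ψ i xh, yh i⟫))) / t
        ≤ ⟪vh, d⟫ + κ * t * ‖d‖^2 + (G t - G 0) / t := by
    intro t ht
    have ht : (0:ℝ) < t := ht
    have hf1 : f (xh + t • d) - f xh ≤ t * ⟪vh, d⟫ + κ * t^2 * ‖d‖^2 := by
      have := hvh (xh + t • d)
      have h1 : xh + t • d - xh = t • d := by abel
      rw [h1] at this
      rw [real_inner_smul_right] at this
      rw [norm_smul] at this
      have : f (xh + t • d) ≤ f xh + t * ⟪vh, d⟫ + κ * ((|t|) ^2 * ‖d‖ ^ 2) := by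
        rw [Real.norm_eq_abs] at this; nlinarith [this]
      rw [abs_of_pos ht] at this
      nlinarith [this]
    have hnum : (f (xh + t • d) + g (xh + t • d) + ∑ i, (c i (yh i + t • e i)
          - ⟪Ψ i (xh + t • d), yh i + t • e i⟫))
        - (f xh + g xh + ∑ i, (c i (yh i) - ⟪Ψ i xh, yh i⟫))
        = (f (xh + t • d) - f xh) + (G t - G 0) := by
      rw [hG0]; simp only [hG]; ring
    rw [hnum, add_div]
    have : (f (xh + t • d) - f xh) / t ≤ ⟪vh, d⟫ + κ * t * ‖d‖^2 := by
      rw [div_le_iff₀ ht]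
      nlinarith [hf1]
    linarith
  -- the comparison function tends to ⟪vh, d⟫ + ℓ
  have hRlim : Filter.Tendsto (fun t : ℝ => ⟪vh, d⟫ + κ * t * ‖d‖^2 + (G t - G 0) / t)
      (𝓝[>] (0:ℝ)) (𝓝 (⟪vh, d⟫ + ℓ)) := by
    have hslope : Filter.Tendsto (fun t => (G t - G 0) / t) (𝓝[>] (0:ℝ)) (𝓝 ℓ) := by
      have h1 := hasDerivAt_iff_tendsto_slope.mp hGl
      have h2 : Filter.Tendsto (slope G 0) (𝓝[>] (0:ℝ)) (𝓝 ℓ) :=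
        h1.mono_left (nhdsWithin_mono 0 (fun t ht => ne_of_gt ht))
      refine h2.congr (fun t => ?_)
      simp [slope_def_field]
    have hkt : Filter.Tendsto (fun t : ℝ => κ * t * ‖d‖^2) (𝓝 0) (𝓝 0) := by
      have hco : Continuous (fun t : ℝ => κ * t * ‖d‖^2) :=
        (continuous_const.mul continuous_id).mul continuous_const
      have := hco.tendsto (0:ℝ)
      simpa using this
    have hlin : Filter.Tendsto (fun t : ℝ => ⟪vh, d⟫ + κ * t * ‖d‖^2) (𝓝[>] (0:ℝ))
        (𝓝 (⟪vh, d⟫ + 0)) :=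
      (hkt.const_add ⟪vh, d⟫).mono_left nhdsWithin_le_nhds
    have h := hlin.add hslope
    rw [add_zero] at h
    exact h
  -- bound the limsup
  have hle1 : diniUpper2
        (fun x' y' => f x' + g x' + ∑ i, (c i (y' i) - ⟪Ψ i x', y' i⟫))
        xh yh d e ≤ ((⟪vh, d⟫ + ℓ : ℝ) : EReal) := by
    rw [diniUpper2]
    refine le_trans (Filter.limsup_le_limsup ?_)
      (le_of_eq ((EReal.tendsto_coe.2 hRlim).limsup_eq))
    filter_upwards [self_mem_nhdsWithin] with t ht
    exact EReal.coe_le_coe_iff.2 (hTR t ht)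
  refine le_trans hle1 (EReal.coe_le_coe_iff.2 ?_)
  -- now the purely algebraic part
  -- compute fderiv g xh d
  have hDg : fderiv ℝ g xh d = -(1/γ) * ‖d‖^2 + (∑ i, ⟪y i, (fderiv ℝ (Ψ i) x) d⟫) - ⟪v, d⟫ := by
    have h1 := prox_dirDeriv g γ hγ0 b xh hxh hgdiff d
    have h2 : xh - b = d - γ • (∑ i, (ContinuousLinearMap.adjoint (fderiv ℝ (Ψ i) x)) (y i))
        + γ • v := by
      rw [hb, hd]; abel
    rw [h2] at h1
    rw [inner_add_left, inner_sub_left, real_inner_smul_left, real_inner_smul_left,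
      real_inner_self_eq_norm_sq, sum_inner] at h1
    simp only [ContinuousLinearMap.adjoint_inner_left] at h1
    rw [h1]
    field_simp
    ring
  have hDc : ∀ i, fderiv ℝ (c i) (yh i) (e i) = -(1/(μ i)) * ‖e i‖^2 + ⟪Ψ i xh, e i⟫ := by
    intro i
    have h1 := prox_dirDeriv (c i) (μ i) (hμ0 i) (y i + (μ i) • Ψ i xh) (yh i) (hyh i) (hcdiff i)
      (e i)
    have h2 : yh i - (y i + (μ i) • Ψ i xh) = e i - (μ i) • Ψ i xh := by simp only [he]; abel
    rw [h2, inner_sub_left, real_inner_smul_left, real_inner_self_eq_norm_sq] at h1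
    rw [h1]
    have := (hμ0 i).ne'
    field_simp
    ring
  -- bound ⟪vh - v, d⟫
  have hvv : ⟪vh, d⟫ - ⟪v, d⟫ ≤ 2 * κ * ‖d‖^2 := by
    have h1 := hv xh
    have h2 := hvh x
    have h3 : x - xh = -d := by rw [hd]; abel
    rw [h3, inner_neg_right] at h2
    rw [← hd] at h1
    have h4 : ‖-d‖ = ‖d‖ := norm_neg d
    rw [h4] at h2
    linarith
  -- per-index bound
  have hterm : ∀ i, ⟪y i, (fderiv ℝ (Ψ i) x) d⟫ - ⟪(fderiv ℝ (Ψ i) xh) d, yh i⟫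
      ≤ L i * ‖y i‖ * ‖d‖^2 + (1/2) * ‖d‖^2 + (1/2) * ‖fderiv ℝ (Ψ i) xh‖^2 * ‖e i‖^2 := by
    intro i
    have hyhe : yh i = y i + e i := by simp only [he]; abel
    have h1 : ⟪y i, (fderiv ℝ (Ψ i) x) d⟫ - ⟪(fderiv ℝ (Ψ i) xh) d, yh i⟫
        = ⟪y i, ((fderiv ℝ (Ψ i) x) - (fderiv ℝ (Ψ i) xh)) d⟫ - ⟪(fderiv ℝ (Ψ i) xh) d, e i⟫ := by
      simp only [hyhe, ContinuousLinearMap.sub_apply, inner_add_right, inner_sub_right]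
      linear_combination -real_inner_comm (y i) ((fderiv ℝ (Ψ i) xh) d)
    rw [h1]
    have h2 : ⟪y i, ((fderiv ℝ (Ψ i) x) - (fderiv ℝ (Ψ i) xh)) d⟫ ≤ L i * ‖y i‖ * ‖d‖^2 := by
      calc ⟪y i, ((fderiv ℝ (Ψ i) x) - (fderiv ℝ (Ψ i) xh)) d⟫
          ≤ ‖y i‖ * ‖((fderiv ℝ (Ψ i) x) - (fderiv ℝ (Ψ i) xh)) d‖ := real_inner_le_norm _ _
        _ ≤ ‖y i‖ * (‖(fderiv ℝ (Ψ i) x) - (fderiv ℝ (Ψ i) xh)‖ * ‖d‖) := by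
            gcongr; exact ContinuousLinearMap.le_opNorm _ _
        _ ≤ ‖y i‖ * ((L i * ‖x - xh‖) * ‖d‖) := by
            gcongr; exact hΨlip i x xh
        _ = L i * ‖y i‖ * ‖d‖^2 := by
            rw [show x - xh = -d from by rw [hd]; abel, norm_neg]; ring
    have h3 : -⟪(fderiv ℝ (Ψ i) xh) d, e i⟫ ≤ (1/2) * ‖d‖^2 + (1/2) * ‖fderiv ℝ (Ψ i) xh‖^2 * ‖e i‖^2 := by
      have hcs : -⟪(fderiv ℝ (Ψ i) xh) d, e i⟫ ≤ ‖(fderiv ℝ (Ψ i) xh) d‖ * ‖e i‖ := by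
        have := real_inner_le_norm (-((fderiv ℝ (Ψ i) xh) d)) (e i)
        simpa [inner_neg_left] using this
      have hop : ‖(fderiv ℝ (Ψ i) xh) d‖ ≤ ‖fderiv ℝ (Ψ i) xh‖ * ‖d‖ :=
        ContinuousLinearMap.le_opNorm _ _
      nlinarith [mul_le_mul_of_nonneg_right hop (norm_nonneg (e i)),
        sq_nonneg (‖d‖ - ‖fderiv ℝ (Ψ i) xh‖ * ‖e i‖), norm_nonneg (e i), norm_nonneg d,
        norm_nonneg (fderiv ℝ (Ψ i) xh)]
    linarith
  -- assemble
  rw [hℓ, hDg]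
  simp only [hDc]
  have hsum : ∑ i, (-(1/(μ i)) * ‖e i‖^2 + ⟪Ψ i xh, e i⟫
      - (⟪Ψ i xh, e i⟫ + ⟪(fderiv ℝ (Ψ i) xh) d, yh i⟫))
      = ∑ i, (-(1/(μ i)) * ‖e i‖^2 - ⟪(fderiv ℝ (Ψ i) xh) d, yh i⟫) := by
    apply Finset.sum_congr rfl; intro i _; ring
  have hfinal : ∑ i, ⟪y i, (fderiv ℝ (Ψ i) x) d⟫
      + ∑ i, (-(1/(μ i)) * ‖e i‖^2 - ⟪(fderiv ℝ (Ψ i) xh) d, yh i⟫)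
      ≤ ∑ i, (L i * ‖y i‖ * ‖d‖^2 + (1/2) * ‖d‖^2
        + ((1/2) * ‖fderiv ℝ (Ψ i) xh‖^2 - 1/(μ i)) * ‖e i‖^2) := by
    rw [← Finset.sum_add_distrib]
    apply Finset.sum_le_sum
    intro i _
    have := hterm i
    nlinarith [this]
  have hsum2 : ∑ i, (L i * ‖y i‖ * ‖d‖^2 + (1/2) * ‖d‖^2
        + ((1/2) * ‖fderiv ℝ (Ψ i) xh‖^2 - 1/(μ i)) * ‖e i‖^2)
      = (∑ i, L i * ‖y i‖) * ‖d‖^2 + (p : ℝ)/2 * ‖d‖^2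
        + ∑ i, ((1/2) * ‖fderiv ℝ (Ψ i) xh‖^2 - 1/(μ i)) * ‖e i‖^2 := by
    rw [Finset.sum_add_distrib, Finset.sum_add_distrib, ← Finset.sum_mul]
    simp [Finset.sum_const, Finset.card_univ]
    ring
  calc ⟪vh, d⟫ + (-(1/γ) * ‖d‖^2 + (∑ i, ⟪y i, (fderiv ℝ (Ψ i) x) d⟫) - ⟪v, d⟫
        + ∑ i, (-(1/(μ i)) * ‖e i‖^2 + ⟪Ψ i xh, e i⟫
          - (⟪Ψ i xh, e i⟫ + ⟪(fderiv ℝ (Ψ i) xh) d, yh i⟫)))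
      = (⟪vh, d⟫ - ⟪v, d⟫) + (-(1/γ) * ‖d‖^2)
        + ((∑ i, ⟪y i, (fderiv ℝ (Ψ i) x) d⟫)
          + ∑ i, (-(1/(μ i)) * ‖e i‖^2 - ⟪(fderiv ℝ (Ψ i) xh) d, yh i⟫)) := by
        rw [hsum]; ring
    _ ≤ 2 * κ * ‖d‖^2 + (-(1/γ) * ‖d‖^2)
        + ((∑ i, L i * ‖y i‖) * ‖d‖^2 + (p : ℝ)/2 * ‖d‖^2
          + ∑ i, ((1/2) * ‖fderiv ℝ (Ψ i) xh‖^2 - 1/(μ i)) * ‖e i‖^2) := by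
        rw [← hsum2]; linarith [hfinal]
    _ = (2 * κ + (p : ℝ) / 2 + (∑ i, L i * ‖y i‖) - 1 / γ) * ‖d‖^2
        + ∑ i, ((1/2) * ‖fderiv ℝ (Ψ i) xh‖^2 - 1/(μ i)) * ‖e i‖^2 := by ring
end

section
/- Let σ ≥ 0, let (Δ_k)_{k∈ℕ} be a sequence of nonnegative reals, and let (s_k)_{k∈ℕ} be a nonincreasing sequence of reals. Fix k₀ ∈ ℕ and k ≥ k₀, and suppose that Δ_{j+1} ≤ √(σ (s_j − s_{j+1}) Δ_j) for every j with k₀ ≤ j ≤ k. Then Δ_{k+1} ≤ σ Σ_{j=0}^{k−k₀} 2^{−(j+1)} (s_{k−j} − s_{k−j+1}) + 2^{−(k+1−k₀)} Δ_{k₀}. -/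
open scoped BigOperators

lemma sqrt_mul_le_half_add (a b : ℝ) (ha : 0 ≤ a) (hb : 0 ≤ b) :
    Real.sqrt (a * b) ≤ (a + b) / 2 := by
  rw [show (a + b) / 2 = Real.sqrt (((a + b) / 2) ^ 2) by
    rw [Real.sqrt_sq (by positivity)]]
  apply Real.sqrt_le_sqrt
  nlinarith [sq_nonneg (a - b)]

/-- Claim 2 in the KL convergence proof of the Boosted Double-proximal Subgradient Algorithm:
the inductive estimate obtained from the square-root recursion and the weighted AM–GM
inequality. -/
theorem kl_inductive_estimate (σ : ℝ) (hσ : 0 ≤ σ)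
    (Δ : ℕ → ℝ) (hΔ : ∀ k, 0 ≤ Δ k)
    (s : ℕ → ℝ) (hs : ∀ k, s (k + 1) ≤ s k)
    (k₀ k : ℕ) (hk : k₀ ≤ k)
    (hrec : ∀ j, k₀ ≤ j → j ≤ k → Δ (j + 1) ≤ Real.sqrt (σ * (s j - s (j + 1)) * Δ j)) :
    Δ (k + 1) ≤ σ * ∑ j ∈ Finset.range (k - k₀ + 1),
        (1 / 2 : ℝ) ^ (j + 1) * (s (k - j) - s (k - j + 1))
      + (1 / 2 : ℝ) ^ (k + 1 - k₀) * Δ k₀ := by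
  revert hrec
  induction k, hk using Nat.le_induction with
  | base =>
    intro hrec
    have hd : 0 ≤ σ * (s k₀ - s (k₀ + 1)) :=
      mul_nonneg hσ (by linarith [hs k₀])
    have h1 := hrec k₀ le_rfl le_rfl
    have h2 := sqrt_mul_le_half_add _ _ hd (hΔ k₀)
    simp only [Nat.sub_self, zero_add, Finset.sum_range_one, Nat.sub_zero,
      Nat.add_sub_cancel_left, pow_one]
    linarith [h1, h2]
  | succ k hk ih =>
    intro hrec
    have IH := ih (fun j hj hjk => hrec j hj (hjk.trans (Nat.le_succ k)))
    have hd : 0 ≤ σ * (s (k + 1) - s (k + 2)) :=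
      mul_nonneg hσ (by linarith [hs (k + 1)])
    have h1 := hrec (k + 1) (hk.trans (Nat.le_succ k)) le_rfl
    have h2 := sqrt_mul_le_half_add _ _ hd (hΔ (k + 1))
    have key : Δ (k + 2) ≤ σ * (s (k + 1) - s (k + 2)) / 2 + Δ (k + 1) / 2 := by
      calc Δ (k + 2) ≤ (σ * (s (k + 1) - s (k + 2)) + Δ (k + 1)) / 2 := le_trans h1 h2
        _ = _ := by ring
    -- rewrite the sum over range (k+1-k₀+1) by splitting off the j = 0 term
    have hsum : ∑ j ∈ Finset.range (k + 1 - k₀ + 1),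
          (1 / 2 : ℝ) ^ (j + 1) * (s (k + 1 - j) - s (k + 1 - j + 1))
        = (∑ j ∈ Finset.range (k - k₀ + 1),
            (1 / 2 : ℝ) ^ (j + 2) * (s (k - j) - s (k - j + 1)))
          + (1 / 2 : ℝ) ^ 1 * (s (k + 1) - s (k + 2)) := by
      have hn : k + 1 - k₀ + 1 = (k - k₀ + 1) + 1 := by omega
      rw [hn, Finset.sum_range_succ']
      congr 1
      · apply Finset.sum_congr rfl
        intro j hj
        have : k + 1 - (j + 1) = k - j := by omega
        rw [this]
      --
    rw [hsum]
    have hsum2 : σ * (∑ j ∈ Finset.range (k - k₀ + 1),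
            (1 / 2 : ℝ) ^ (j + 2) * (s (k - j) - s (k - j + 1)))
        = (σ * ∑ j ∈ Finset.range (k - k₀ + 1),
            (1 / 2 : ℝ) ^ (j + 1) * (s (k - j) - s (k - j + 1))) / 2 := by
      rw [Finset.mul_sum, Finset.mul_sum, Finset.sum_div]
      apply Finset.sum_congr rfl
      intro j _
      ring
    have hpow : (1 / 2 : ℝ) ^ (k + 1 + 1 - k₀) = (1 / 2 : ℝ) ^ (k + 1 - k₀) / 2 := by
      have : k + 1 + 1 - k₀ = (k + 1 - k₀) + 1 := by omega
      rw [this, pow_succ]; ring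
    calc Δ (k + 1 + 1) ≤ σ * (s (k + 1) - s (k + 2)) / 2 + Δ (k + 1) / 2 := key
      _ ≤ σ * (s (k + 1) - s (k + 2)) / 2
          + (σ * ∑ j ∈ Finset.range (k - k₀ + 1),
              (1 / 2 : ℝ) ^ (j + 1) * (s (k - j) - s (k - j + 1))
            + (1 / 2 : ℝ) ^ (k + 1 - k₀) * Δ k₀) / 2 := by linarith
      _ = σ * ((∑ j ∈ Finset.range (k - k₀ + 1),
            (1 / 2 : ℝ) ^ (j + 2) * (s (k - j) - s (k - j + 1)))
          + (1 / 2 : ℝ) ^ 1 * (s (k + 1) - s (k + 2)))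
          + (1 / 2 : ℝ) ^ (k + 1 + 1 - k₀) * Δ k₀ := by
        rw [mul_add, hsum2, hpow]; ring
end

section
/- Let σ ≥ 0, let (Δ_k)_{k∈ℕ} be a sequence of nonnegative reals, and let (s_k)_{k∈ℕ} be a nonincreasing sequence of nonnegative reals. Fix k₀ ∈ ℕ and suppose that Δ_{k+1} ≤ √(σ (s_k − s_{k+1}) Δ_k) for every k ≥ k₀. Then for every K ≥ k₀, Σ_{k=k₀}^{K} Δ_k ≤ 2Δ_{k₀} + σ s_{k₀}; in particular the series Σ_{k=k₀}^{∞} Δ_k converges with sum at most 2Δ_{k₀} + σ s_{k₀}. -/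
open scoped BigOperators

/-- Claim 3 / inequality (3.28) in the KL convergence proof of the Boosted Double-proximal
Subgradient Algorithm: under the square-root recursion, the step lengths are summable with
sum at most `2Δ_{k₀} + σ s_{k₀}`. -/
theorem kl_summability_estimate (σ : ℝ) (hσ : 0 ≤ σ)
    (Δ : ℕ → ℝ) (hΔ : ∀ k, 0 ≤ Δ k)
    (s : ℕ → ℝ) (hs_mono : ∀ k, s (k + 1) ≤ s k) (hs_nonneg : ∀ k, 0 ≤ s k)
    (k₀ : ℕ)
    (hrec : ∀ k, k₀ ≤ k → Δ (k + 1) ≤ Real.sqrt (σ * (s k - s (k + 1)) * Δ k)) :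
    (∀ K, k₀ ≤ K → ∑ k ∈ Finset.Icc k₀ K, Δ k ≤ 2 * Δ k₀ + σ * s k₀)
      ∧ Summable (fun j : ℕ => Δ (k₀ + j))
      ∧ (∑' j : ℕ, Δ (k₀ + j)) ≤ 2 * Δ k₀ + σ * s k₀ := by
  -- AM-GM consequence of the recursion
  have key : ∀ k, k₀ ≤ k → 2 * Δ (k + 1) ≤ Δ k + σ * (s k - s (k + 1)) := by
    intro k hk
    have h1 := hrec k hk
    have hx : 0 ≤ σ * (s k - s (k + 1)) := mul_nonneg hσ (by linarith [hs_mono k])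
    have hy : 0 ≤ Δ k := hΔ k
    have h2 : Real.sqrt (σ * (s k - s (k + 1)) * Δ k)
        ≤ (σ * (s k - s (k + 1)) + Δ k) / 2 := by
      rw [show (σ * (s k - s (k + 1)) + Δ k) / 2
          = Real.sqrt (((σ * (s k - s (k + 1)) + Δ k) / 2) ^ 2) from
            (Real.sqrt_sq (by positivity)).symm]
      apply Real.sqrt_le_sqrt
      nlinarith [sq_nonneg (σ * (s k - s (k + 1)) - Δ k)]
    linarith
  -- Invariant by induction
  have inv : ∀ K, k₀ ≤ K →
      (∑ k ∈ Finset.Icc k₀ K, Δ k) + Δ K + σ * s K ≤ 2 * Δ k₀ + σ * s k₀ := by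
    intro K hK
    induction K with
    | zero =>
      have hk0 : k₀ = 0 := Nat.le_zero.mp hK
      subst hk0
      simp
      linarith
    | succ n ih =>
      rcases Nat.lt_or_ge k₀ (n + 1) with h | h
      · have hkn : k₀ ≤ n := Nat.lt_succ_iff.mp h
        have ihn := ih hkn
        have hsum : ∑ k ∈ Finset.Icc k₀ (n + 1), Δ k
            = (∑ k ∈ Finset.Icc k₀ n, Δ k) + Δ (n + 1) := by
          rw [← Finset.sum_Icc_succ_top (by omega : k₀ ≤ n + 1)]
        rw [hsum]
        have hk := key n hkn
        linarith
      · have hk0 : k₀ = n + 1 := le_antisymm hK h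
        subst hk0
        simp
        linarith
  have hbound : ∀ K, k₀ ≤ K → ∑ k ∈ Finset.Icc k₀ K, Δ k ≤ 2 * Δ k₀ + σ * s k₀ := by
    intro K hK
    have := inv K hK
    have := hΔ K
    have := hs_nonneg K
    nlinarith
  have hsums : ∀ n, ∑ j ∈ Finset.range n, Δ (k₀ + j) ≤ 2 * Δ k₀ + σ * s k₀ := by
    intro n
    cases n with
    | zero =>
      rw [Finset.range_zero, Finset.sum_empty]
      have h1 := hΔ k₀; have h2 := hs_nonneg k₀; positivity
    | succ m =>
      have heq : ∑ j ∈ Finset.range (m + 1), Δ (k₀ + j)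
          = ∑ k ∈ Finset.Icc k₀ (k₀ + m), Δ k := by
        rw [show Finset.Icc k₀ (k₀ + m) = Finset.Ico k₀ (k₀ + m + 1) by
          rw [Finset.Ico_add_one_right_eq_Icc]]
        rw [Finset.sum_Ico_eq_sum_range,
          show k₀ + m + 1 - k₀ = m + 1 by omega]
      rw [heq]
      exact hbound _ (Nat.le_add_right _ _)
  exact ⟨hbound, summable_of_sum_range_le (fun n => hΔ _) hsums,
    Real.tsum_le_of_sum_range_le (fun n => hΔ _) hsums⟩
end

section
/- Let n ≥ 1 and q ≥ 1 be natural numbers and define φ_q : ℝⁿ → ℝ by φ_q(x) := Σ_{i=1}^n x_i² − Σ_{i=1}^n |x_i| − Σ_{j=1}^q Σ_{i=1}^n ( |x_i − j| + |x_i + j| ) − Σ_{i=1}^n |x_i − (q+1)|. Then for all x ∈ ℝⁿ, φ_q(x) ≥ −n(q² + 3q + 2), and equality holds if and only if x_i = −(q+1) for every i = 1,…,n. In particular, x* := (−(q+1), …, −(q+1)) is the unique global minimizer of φ_q, with optimal value φ_q(x*) = −n(q² + 3q + 2). -/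
open scoped BigOperators

/-- The test function `φ_q(x) = ‖x‖² − ‖x‖₁ − Σ_{j=1}^q (‖x − je‖₁ + ‖x + je‖₁)
− ‖x − (q+1)e‖₁` written coordinatewise. -/
noncomputable def phiTest (n q : ℕ) (x : EuclideanSpace ℝ (Fin n)) : ℝ :=
  ∑ i, (x i) ^ 2 - ∑ i, |x i|
    - ∑ j ∈ Finset.Icc 1 q, (∑ i, (|x i - (j : ℝ)| + |x i + (j : ℝ)|))
    - ∑ i, |x i - ((q : ℝ) + 1)|

lemma phiAux_abs_eq_two_max (y : ℝ) : |y| = 2 * max y 0 - y := by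
  rcases le_total y 0 with h | h
  · rw [max_eq_right h, abs_of_nonpos h]; ring
  · rw [max_eq_left h, abs_of_nonneg h]; ring

lemma phiAux_key_sum (m : ℕ) : ∀ s : ℝ,
    2 * ∑ c ∈ Finset.range m, max (s - ((c : ℝ) + 1)) 0 ≤ s ^ 2 ∧
    (s ≠ 0 → 2 * ∑ c ∈ Finset.range m, max (s - ((c : ℝ) + 1)) 0 < s ^ 2) := by
  induction m with
  | zero =>
    intro s
    simp only [Finset.range_zero, Finset.sum_empty, mul_zero]
    exact ⟨sq_nonneg s, fun hs => lt_of_le_of_ne (sq_nonneg s) (Ne.symm (pow_ne_zero 2 hs))⟩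
  | succ m ih =>
    intro s
    rcases le_or_gt s 1 with h | h
    · have hz : ∑ c ∈ Finset.range (m + 1), max (s - ((c : ℝ) + 1)) 0 = 0 := by
        apply Finset.sum_eq_zero
        intro c _
        apply max_eq_right
        have hc : (0 : ℝ) ≤ (c : ℝ) := Nat.cast_nonneg c
        linarith
      rw [hz, mul_zero]
      exact ⟨sq_nonneg s, fun hs => lt_of_le_of_ne (sq_nonneg s) (Ne.symm (pow_ne_zero 2 hs))⟩
    · rw [Finset.sum_range_succ']
      have hre : ∀ c ∈ Finset.range m,
          max (s - (((c : ℕ) + 1 : ℕ) + 1 : ℝ)) 0 = max ((s - 1) - ((c : ℝ) + 1)) 0 := by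
        intro c _
        congr 1
        push_cast
        ring
      rw [Finset.sum_congr rfl hre]
      have h0 : max (s - ((0 : ℕ) + 1 : ℝ)) 0 = s - 1 := by
        rw [max_eq_left]
        · norm_num
        · norm_num; linarith
      rw [h0]
      have ihs := (ih (s - 1)).1
      have hsq : (s - 1) ^ 2 = s ^ 2 - 2 * s + 1 := by ring
      constructor
      · nlinarith
      · intro _
        nlinarith

lemma phiAux_Msum (q : ℕ) (t : ℝ) :
    max t 0 + (∑ j ∈ Finset.Icc 1 q, (max (t - (j : ℝ)) 0 + max (t + (j : ℝ)) 0))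
      + max (t - ((q : ℝ) + 1)) 0
    = ∑ c ∈ Finset.range (2 * q + 2), max (t + (q : ℝ) - (c : ℝ)) 0 := by
  induction q with
  | zero =>
    simp [Finset.sum_range_succ]
  | succ q ih =>
    rw [Finset.sum_Icc_succ_top (by omega : 1 ≤ q + 1)]
    have hn : 2 * (q + 1) + 2 = (2 * q + 2) + 1 + 1 := by omega
    rw [hn, Finset.sum_range_succ', Finset.sum_range_succ]
    have hre : ∀ c ∈ Finset.range (2 * q + 2),
        max (t + ((q : ℕ) + 1 : ℕ) - (((c : ℕ) + 1 : ℕ) : ℝ)) 0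
          = max (t + (q : ℝ) - (c : ℝ)) 0 := by
      intro c _
      congr 1
      push_cast
      ring
    rw [Finset.sum_congr rfl hre, ← ih]
    push_cast
    rw [show t + ((q:ℝ) + 1) - (2 * (q:ℝ) + 2 + 1) = t - ((q:ℝ) + 1 + 1) by ring,
        show t + ((q:ℝ) + 1) - (0:ℝ) = t + ((q:ℝ) + 1) by ring]
    ring

lemma phiAux_coord_bound (q : ℕ) (t : ℝ) :
    -((q : ℝ) ^ 2 + 3 * (q : ℝ) + 2)
      ≤ t ^ 2 - |t| - (∑ j ∈ Finset.Icc 1 q, (|t - (j : ℝ)| + |t + (j : ℝ)|))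
          - |t - ((q : ℝ) + 1)| ∧
    (t ^ 2 - |t| - (∑ j ∈ Finset.Icc 1 q, (|t - (j : ℝ)| + |t + (j : ℝ)|))
          - |t - ((q : ℝ) + 1)| = -((q : ℝ) ^ 2 + 3 * (q : ℝ) + 2)
      ↔ t = -((q : ℝ) + 1)) := by
  set S := ∑ c ∈ Finset.range (2 * q + 2), max (t + (q : ℝ) + 1 - ((c : ℝ) + 1)) 0 with hS
  have hSM : max t 0 + (∑ j ∈ Finset.Icc 1 q, (max (t - (j : ℝ)) 0 + max (t + (j : ℝ)) 0))
      + max (t - ((q : ℝ) + 1)) 0 = S := by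
    rw [phiAux_Msum, hS]
    exact Finset.sum_congr rfl (fun c _ => by congr 1; ring)
  have hjsum : ∑ j ∈ Finset.Icc 1 q, (|t - (j : ℝ)| + |t + (j : ℝ)|)
      = 2 * (∑ j ∈ Finset.Icc 1 q, (max (t - (j : ℝ)) 0 + max (t + (j : ℝ)) 0))
        - 2 * (q : ℝ) * t := by
    have : ∑ j ∈ Finset.Icc 1 q, (|t - (j : ℝ)| + |t + (j : ℝ)|)
        = ∑ j ∈ Finset.Icc 1 q,
            (2 * (max (t - (j : ℝ)) 0 + max (t + (j : ℝ)) 0) - 2 * t) := by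
      refine Finset.sum_congr rfl (fun j _ => ?_)
      rw [phiAux_abs_eq_two_max (t - (j : ℝ)), phiAux_abs_eq_two_max (t + (j : ℝ))]
      ring
    rw [this, Finset.sum_sub_distrib, Finset.sum_const, Nat.card_Icc, ← Finset.mul_sum]
    simp only [Nat.add_sub_cancel, nsmul_eq_mul]
    ring
  have hF : t ^ 2 - |t| - (∑ j ∈ Finset.Icc 1 q, (|t - (j : ℝ)| + |t + (j : ℝ)|))
        - |t - ((q : ℝ) + 1)|
      = t ^ 2 + (2 * (q : ℝ) + 2) * t - ((q : ℝ) + 1) - 2 * S := by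
    rw [phiAux_abs_eq_two_max t, phiAux_abs_eq_two_max (t - ((q : ℝ) + 1)), hjsum, ← hSM]
    ring
  obtain ⟨hle, hlt⟩ := phiAux_key_sum (2 * q + 2) (t + (q : ℝ) + 1)
  rw [← hS] at hle hlt
  constructor
  · rw [hF]; nlinarith [hle]
  · constructor
    · intro heq
      by_contra hne
      have hs : t + (q : ℝ) + 1 ≠ 0 := fun h => hne (by linarith)
      have := hlt hs
      rw [hF] at heq
      nlinarith [this]
    · intro ht
      have hS0 : S = 0 := by
        rw [hS]
        apply Finset.sum_eq_zero
        intro c _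
        apply max_eq_right
        have hc : (0 : ℝ) ≤ (c : ℝ) := Nat.cast_nonneg c
        rw [ht]; linarith
      rw [hF, hS0, ht]
      ring

/-- The test function `φ_q` is bounded below by `−n(q² + 3q + 2)`, with equality exactly at
the point whose coordinates all equal `−(q+1)`; thus this point is the unique global
minimizer, with optimal value `−n(q² + 3q + 2)`. -/
theorem phiTest_global_min (n q : ℕ) (hn : 1 ≤ n) (hq : 1 ≤ q) :
    ∀ x : EuclideanSpace ℝ (Fin n),
      -(n : ℝ) * ((q : ℝ) ^ 2 + 3 * (q : ℝ) + 2) ≤ phiTest n q x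
        ∧ (phiTest n q x = -(n : ℝ) * ((q : ℝ) ^ 2 + 3 * (q : ℝ) + 2)
            ↔ ∀ i, x i = -((q : ℝ) + 1)) := by
  intro x
  set B : ℝ := (q : ℝ) ^ 2 + 3 * (q : ℝ) + 2 with hB
  have hphi : phiTest n q x
      = ∑ i, (x i ^ 2 - |x i| - (∑ j ∈ Finset.Icc 1 q, (|x i - (j : ℝ)| + |x i + (j : ℝ)|))
          - |x i - ((q : ℝ) + 1)|) := by
    unfold phiTest
    rw [Finset.sum_comm, ← Finset.sum_sub_distrib, ← Finset.sum_sub_distrib,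
      ← Finset.sum_sub_distrib]
  have hlow : ∀ i : Fin n,
      -B ≤ x i ^ 2 - |x i| - (∑ j ∈ Finset.Icc 1 q, (|x i - (j : ℝ)| + |x i + (j : ℝ)|))
          - |x i - ((q : ℝ) + 1)| := fun i => (phiAux_coord_bound q (x i)).1
  have hkey : ∀ i : Fin n,
      (x i ^ 2 - |x i| - (∑ j ∈ Finset.Icc 1 q, (|x i - (j : ℝ)| + |x i + (j : ℝ)|))
          - |x i - ((q : ℝ) + 1)| + B = 0 ↔ x i = -((q : ℝ) + 1)) := by
    intro i
    have h2 := (phiAux_coord_bound q (x i)).2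
    constructor
    · intro h; exact h2.mp (by linarith)
    · intro h; have := h2.mpr h; linarith
  have hsplit : ∑ i : Fin n,
      (x i ^ 2 - |x i| - (∑ j ∈ Finset.Icc 1 q, (|x i - (j : ℝ)| + |x i + (j : ℝ)|))
          - |x i - ((q : ℝ) + 1)| + B)
      = phiTest n q x + (n : ℝ) * B := by
    rw [Finset.sum_add_distrib, Finset.sum_const, Finset.card_univ, Fintype.card_fin,
      nsmul_eq_mul, hphi]
  have hzero := Finset.sum_eq_zero_iff_of_nonneg
    (f := fun i : Fin n =>
      x i ^ 2 - |x i| - (∑ j ∈ Finset.Icc 1 q, (|x i - (j : ℝ)| + |x i + (j : ℝ)|))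
        - |x i - ((q : ℝ) + 1)| + B)
    (s := Finset.univ)
    (fun i _ => by have := hlow i; dsimp only; linarith)
  constructor
  · have h1 : ∑ i : Fin n, (-B)
        ≤ ∑ i, (x i ^ 2 - |x i|
            - (∑ j ∈ Finset.Icc 1 q, (|x i - (j : ℝ)| + |x i + (j : ℝ)|))
            - |x i - ((q : ℝ) + 1)|) :=
      Finset.sum_le_sum (fun i _ => hlow i)
    have h2 : ∑ i : Fin n, (-B) = -(n : ℝ) * B := by
      rw [Finset.sum_const, Finset.card_univ, Fintype.card_fin, nsmul_eq_mul]
      ring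
    rw [hphi]
    linarith [h1, h2 ▸ h1]
  · constructor
    · intro h i
      have hsum0 : ∑ i : Fin n,
          (x i ^ 2 - |x i| - (∑ j ∈ Finset.Icc 1 q, (|x i - (j : ℝ)| + |x i + (j : ℝ)|))
            - |x i - ((q : ℝ) + 1)| + B) = 0 := by
        rw [hsplit, h]; ring
      exact (hkey i).mp (hzero.mp hsum0 i (Finset.mem_univ i))
    · intro h
      have hsum0 : ∑ i : Fin n,
          (x i ^ 2 - |x i| - (∑ j ∈ Finset.Icc 1 q, (|x i - (j : ℝ)| + |x i + (j : ℝ)|))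
            - |x i - ((q : ℝ) + 1)| + B) = 0 :=
        Finset.sum_eq_zero (fun i _ => (hkey i).mpr (h i))
      rw [hsplit] at hsum0
      linarith
end
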